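/- Let C_1, C_2, …, C_l be linear codes of length n over F_q and let A be an l × l orthogonal matrix over F_q (A Aᵀ = I_l). Then the matrix-product code C = [C_1, C_2, …, C_l]A is LCD if and only if C_1, C_2, …, C_l are all LCD codes. -/

import Mathlib

/-- The Euclidean dual of a code `C ⊆ R^n`:
`C^⊥ = {x : x · c = 0 for all c ∈ C}` where `x · y = ∑ i, x i * y i`. -/
def dualCode {R : Type*} [CommRing R] {n : ℕ} (C : Submodule R (Fin n → R)) :
    Submodule R (Fin n → R) where
  carrier := {x | ∀ c ∈ C, ∑ i, x i * c i = 0}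
  zero_mem' := by intro c hc; simp
  add_mem' := by
    intro a b ha hb c hc
    have h1 := ha c hc
    have h2 := hb c hc
    simp only [Pi.add_apply, add_mul, Finset.sum_add_distrib, h1, h2, add_zero]
  smul_mem' := by
    intro r x hx c hc
    have h1 := hx c hc
    simp only [Pi.smul_apply, smul_eq_mul, mul_assoc, ← Finset.mul_sum, h1, mul_zero]

/-- A code is LCD (linear complementary dual) if `C ∩ C^⊥ = {0}`. -/
def IsLCD {R : Type*} [CommRing R] {n : ℕ} (C : Submodule R (Fin n → R)) : Prop :=
  C ⊓ dualCode C = ⊥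

/-- The matrix-product code `[C_1, …, C_l]A`: all `n × m` matrices
`[c_1, …, c_l] · A` where the `i`-th column `c i` of the left factor belongs to `C i`. -/
def matrixProductCode {F : Type*} [Field F] {n l m : ℕ}
    (C : Fin l → Submodule F (Fin n → F)) (A : Matrix (Fin l) (Fin m) F) :
    Submodule F (Matrix (Fin n) (Fin m) F) where
  carrier := {X | ∃ c : Fin l → Fin n → F, (∀ i, c i ∈ C i) ∧
      X = (Matrix.of fun r i => c i r) * A}
  zero_mem' := ⟨0, fun i => (C i).zero_mem, by
    ext r j; simp [Matrix.mul_apply]⟩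
  add_mem' := by
    rintro X Y ⟨c, hc, rfl⟩ ⟨c', hc', rfl⟩
    refine ⟨c + c', fun i => (C i).add_mem (hc i) (hc' i), ?_⟩
    rw [← Matrix.add_mul]
    rfl
  smul_mem' := by
    rintro r X ⟨c, hc, rfl⟩
    refine ⟨r • c, fun i => (C i).smul_mem r (hc i), ?_⟩
    rw [← Matrix.smul_mul]
    rfl

/-- Euclidean dual of a code whose codewords are `n × m` matrices, with respect to
the inner product summing the entrywise products over all entries. -/
def dualMatCode {F : Type*} [Field F] {n m : ℕ}
    (C : Submodule F (Matrix (Fin n) (Fin m) F)) :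
    Submodule F (Matrix (Fin n) (Fin m) F) where
  carrier := {X | ∀ Y ∈ C, ∑ r, ∑ j, X r j * Y r j = 0}
  zero_mem' := by intro Y hY; simp
  add_mem' := by
    intro X X' hX hX' Y hY
    have h1 := hX Y hY
    have h2 := hX' Y hY
    simp only [Matrix.add_apply, add_mul, Finset.sum_add_distrib, h1, h2, add_zero]
  smul_mem' := by
    intro r X hX Y hY
    have h1 := hX Y hY
    simp only [Matrix.smul_apply, smul_eq_mul, mul_assoc, ← Finset.mul_sum, h1, mul_zero]

/-- LCD property for codes of matrix codewords. -/
def IsLCDMat {F : Type*} [Field F] {n m : ℕ}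
    (C : Submodule F (Matrix (Fin n) (Fin m) F)) : Prop :=
  C ⊓ dualMatCode C = ⊥

/-- For an orthogonal matrix `A`, the matrix-product code `[C_1, …, C_l]A` is LCD if
and only if all the codes `C_1, …, C_l` are LCD. -/
theorem matrixProductCode_lcd_iff {F : Type*} [Field F] [Fintype F] {n l : ℕ}
    (C : Fin l → Submodule F (Fin n → F)) (A : Matrix (Fin l) (Fin l) F)
    (hA : A * A.transpose = 1) :
    IsLCDMat (matrixProductCode C A) ↔ ∀ i, IsLCD (C i) := by
  have hA' : A.transpose * A = 1 := mul_eq_one_comm.mp hA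
  have trace_eq : ∀ (U V : Matrix (Fin n) (Fin l) F),
      ∑ r, ∑ j, U r j * V r j = Matrix.trace (U * V.transpose) := by
    intro U V
    simp [Matrix.trace, Matrix.mul_apply, Matrix.diag]
  have inner_eq : ∀ X Y : Matrix (Fin n) (Fin l) F,
      ∑ r, ∑ j, (X * A) r j * (Y * A) r j = ∑ r, ∑ j, X r j * Y r j := by
    intro X Y
    rw [trace_eq, trace_eq, Matrix.transpose_mul, ← Matrix.mul_assoc,
      Matrix.mul_assoc X A, hA, Matrix.mul_one]
  have cancel : ∀ X : Matrix (Fin n) (Fin l) F, X * A.transpose * A = X := by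
    intro X; rw [Matrix.mul_assoc, hA', Matrix.mul_one]
  have cancel' : ∀ X : Matrix (Fin n) (Fin l) F, X * A * A.transpose = X := by
    intro X; rw [Matrix.mul_assoc, hA, Matrix.mul_one]
  have mem_code : ∀ X, X ∈ matrixProductCode C A ↔
      ∀ i, (fun r => (X * A.transpose) r i) ∈ C i := by
    intro X
    constructor
    · rintro ⟨c, hc, rfl⟩ i
      rw [cancel']
      exact hc i
    · intro h
      refine ⟨fun i r => (X * A.transpose) r i, h, ?_⟩
      show X = X * A.transpose * A
      rw [cancel]
  have mem_dual : ∀ X, X ∈ dualMatCode (matrixProductCode C A) ↔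
      ∀ i, (fun r => (X * A.transpose) r i) ∈ dualCode (C i) := by
    intro X
    constructor
    · intro hX i c hc
      set M : Matrix (Fin n) (Fin l) F := Matrix.of fun r j => if j = i then c r else 0
        with hM
      have hMA : M * A ∈ matrixProductCode C A := by
        refine ⟨fun j r => if j = i then c r else 0, fun j => ?_, rfl⟩
        by_cases h : j = i
        · subst h; simpa using hc
        · have h0 : (fun r => if j = i then c r else 0) = (0 : Fin n → F) := by
            funext r; simp [h]
          show (fun r => if j = i then c r else 0) ∈ C j
          rw [h0]
          exact (C j).zero_mem
      have h0 := hX (M * A) hMA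
      have hX' : X = (X * A.transpose) * A := (cancel X).symm
      rw [hX', inner_eq] at h0
      have : ∑ r, ∑ j, (X * A.transpose) r j * M r j
          = ∑ r, (X * A.transpose) r i * c r := by
        refine Finset.sum_congr rfl fun r _ => ?_
        rw [Finset.sum_eq_single i]
        · simp [hM]
        · intro b _ hb; simp [hM, hb]
        · intro h; exact absurd (Finset.mem_univ i) h
      rw [this] at h0
      simpa using h0
    · intro h Y hY
      obtain ⟨c, hc, rfl⟩ := hY
      have hX' : X = (X * A.transpose) * A := (cancel X).symm
      rw [hX', inner_eq, Finset.sum_comm]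
      refine Finset.sum_eq_zero fun j _ => ?_
      exact h j (fun r => c j r) (hc j)
  constructor
  · intro hLCD i
    rw [IsLCD, eq_bot_iff]
    intro v hv
    obtain ⟨hv1, hv2⟩ := Submodule.mem_inf.mp hv
    set M : Matrix (Fin n) (Fin l) F := Matrix.of fun r j => if j = i then v r else 0
      with hM
    have hcols : ∀ j, (fun r => M r j) ∈ C j ∧ (fun r => M r j) ∈ dualCode (C j) := by
      intro j
      by_cases h : j = i
      · subst h
        constructor
        · simpa [hM] using hv1
        · simpa [hM] using hv2
      · have h0 : (fun r => M r j) = (0 : Fin n → F) := by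
          funext r; simp [hM, h]
        rw [h0]
        exact ⟨(C j).zero_mem, (dualCode (C j)).zero_mem⟩
    have hmem : M * A ∈ matrixProductCode C A ⊓ dualMatCode (matrixProductCode C A) := by
      refine Submodule.mem_inf.mpr ⟨?_, ?_⟩
      · rw [mem_code]; intro j; rw [cancel']; exact (hcols j).1
      · rw [mem_dual]; intro j; rw [cancel']; exact (hcols j).2
    have hLCD' : matrixProductCode C A ⊓ dualMatCode (matrixProductCode C A) = ⊥ := hLCD
    have hz : M * A = 0 := (Submodule.eq_bot_iff _).mp hLCD' (M * A) hmem
    have hM0 : M = 0 := by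
      have := congrArg (· * A.transpose) hz
      simpa [cancel'] using this
    show v ∈ (⊥ : Submodule F (Fin n → F))
    have : ∀ r, v r = 0 := by
      intro r
      have := congrFun (congrFun hM0 r) i
      simpa [hM] using this
    simpa [Submodule.mem_bot] using (funext this : v = 0)
  · intro h
    rw [IsLCDMat, eq_bot_iff]
    intro X hX
    obtain ⟨hX1, hX2⟩ := Submodule.mem_inf.mp hX
    rw [mem_code] at hX1
    rw [mem_dual] at hX2
    have hcol : ∀ i r, (X * A.transpose) r i = 0 := by
      intro i r
      have hmem : (fun r => (X * A.transpose) r i) ∈ C i ⊓ dualCode (C i) :=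
        ⟨hX1 i, hX2 i⟩
      rw [h i] at hmem
      have := (Submodule.mem_bot F).mp hmem
      exact congrFun this r
    have hXA : X * A.transpose = 0 := by
      ext r i; exact hcol i r
    have : X = 0 := by
      have := congrArg (· * A) hXA
      simpa [cancel] using this
    simp [this]
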